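/- Let λ be an uncountable cardinal, G a graph on λ⁺ with chromatic number λ⁺. Then there exists a function f : λ⁺ → λ⁺ such that for every closed unbounded set C ⊆ λ⁺, the induced subgraph of G on the set ⋃{[α, f(α)] : α ∈ C} has chromatic number λ⁺. -/

import Mathlib

open Cardinal Ordinal Set

/-- `G` admits a proper coloring of the vertices in `S` using at most `μ` colors. -/
def ColorableOn (G : SimpleGraph Ordinal) (S : Set Ordinal) (μ : Cardinal) : Prop :=
  ∃ c : Ordinal → Ordinal, (∀ x ∈ S, c x < μ.ord) ∧
    ∀ x ∈ S, ∀ y ∈ S, G.Adj x y → c x ≠ c y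

/-- `C` is a closed unbounded subset of the ordinal `κ`. -/
def IsClubIn (C : Set Ordinal) (κ : Ordinal) : Prop :=
  C ⊆ Set.Iio κ ∧ (∀ x < κ, ∃ y ∈ C, x < y) ∧
    ∀ s ⊆ C, s.Nonempty → sSup s < κ → sSup s ∈ C

/-- The least element of `S` strictly above `b`. -/
noncomputable def clubNext (S : Set Ordinal) (b : Ordinal) : Ordinal :=
  sInf {y | y ∈ S ∧ b < y}

lemma clubNext_spec {S : Set Ordinal} {κ b : Ordinal}
    (hunb : ∀ x < κ, ∃ y ∈ S, x < y) (hb : b < κ) :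
    clubNext S b ∈ S ∧ b < clubNext S b := by
  have hne : {y | y ∈ S ∧ b < y}.Nonempty := by
    obtain ⟨y, hy, hby⟩ := hunb b hb
    exact ⟨y, hy, hby⟩
  exact csInf_mem hne

lemma supNat_lt {κ : Ordinal.{0}} (hcof : ℵ₀ < κ.cof) (g : ℕ → Ordinal)
    (hg : ∀ n, g n < κ) : (⨆ n, g n) < κ := by
  refine Ordinal.iSup_lt_ord ?_ hg
  rw [Cardinal.mk_nat]
  exact hcof

lemma isClubIn_iInter {κ : Ordinal.{0}} (hcof : ℵ₀ < κ.cof)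
    (Cs : ℕ → Set Ordinal) (h : ∀ n, IsClubIn (Cs n) κ) :
    IsClubIn (⋂ n, Cs n) κ := by
  refine ⟨(Set.iInter_subset Cs 0).trans (h 0).1, ?_, ?_⟩
  · intro x hx
    set z : ℕ → Ordinal := fun k =>
      Nat.rec x (fun _ zk => ⨆ n, clubNext (Cs n) zk) k with hzdef
    have hz0 : z 0 = x := rfl
    have hzS : ∀ k, z (k + 1) = ⨆ n, clubNext (Cs n) (z k) := fun k => rfl
    have hzlt : ∀ k, z k < κ := by
      intro k
      induction k with
      | zero => exact hx
      | succ k ih =>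
        rw [hzS]
        exact supNat_lt hcof _ fun n => (h n).1 (clubNext_spec (h n).2.1 ih).1
    have hznext : ∀ k n, clubNext (Cs n) (z k) ∈ Cs n ∧ z k < clubNext (Cs n) (z k) :=
      fun k n => clubNext_spec (h n).2.1 (hzlt k)
    have hzmono : ∀ k, z k < z (k + 1) := by
      intro k
      rw [hzS]
      exact (hznext k 0).2.trans_le (le_ciSup (Ordinal.bddAbove_range _) 0)
    have hZlt : (⨆ k, z k) < κ := supNat_lt hcof _ hzlt
    have hZmem : ∀ n, (⨆ k, z k) ∈ Cs n := by
      intro n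
      have hsub : Set.range (fun k => clubNext (Cs n) (z k)) ⊆ Cs n := by
        rintro _ ⟨k, rfl⟩
        exact (hznext k n).1
      have hsup : sSup (Set.range fun k => clubNext (Cs n) (z k)) = ⨆ k, z k := by
        apply le_antisymm
        · refine csSup_le ⟨_, ⟨0, rfl⟩⟩ ?_
          rintro _ ⟨k, rfl⟩
          have h1 : clubNext (Cs n) (z k) ≤ z (k + 1) := by
            rw [hzS]
            exact le_ciSup (Ordinal.bddAbove_range _) n
          exact h1.trans (le_ciSup (Ordinal.bddAbove_range _) (k + 1))
        · refine ciSup_le fun k => ?_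
          exact (hznext k n).2.le.trans (le_csSup (Ordinal.bddAbove_range _) ⟨k, rfl⟩)
      have hmem := (h n).2.2 _ hsub ⟨_, ⟨0, rfl⟩⟩ (by rw [hsup]; exact hZlt)
      rwa [hsup] at hmem
    refine ⟨⨆ k, z k, Set.mem_iInter.2 hZmem, ?_⟩
    calc x = z 0 := hz0.symm
      _ < z 1 := hzmono 0
      _ ≤ ⨆ k, z k := le_ciSup (Ordinal.bddAbove_range _) 1
  · intro s hs hne hlt
    exact Set.mem_iInter.2 fun n => (h n).2.2 s (hs.trans (Set.iInter_subset Cs n)) hne hlt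

lemma isClubIn_inter {κ : Ordinal.{0}} (hcof : ℵ₀ < κ.cof) {C D : Set Ordinal}
    (hC : IsClubIn C κ) (hD : IsClubIn D κ) : IsClubIn (C ∩ D) κ := by
  have h := isClubIn_iInter hcof (fun n => if n = 0 then C else D)
    (fun n => by by_cases hn : n = 0 <;> simp [hn, hC, hD])
  have he : (⋂ n : ℕ, if n = 0 then C else D) = C ∩ D := by
    apply Set.Subset.antisymm
    · intro x hx
      have h0 := Set.mem_iInter.1 hx 0
      have h1 := Set.mem_iInter.1 hx 1
      simp only [if_pos rfl] at h0
      simp only [Nat.one_ne_zero, if_false] at h1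
      exact ⟨h0, h1⟩
    · intro x hx
      exact Set.mem_iInter.2 fun n => by by_cases hn : n = 0 <;> simp [hn, hx.1, hx.2]
  rwa [he] at h

lemma code_inj {a b : Ordinal.{0}} {i j : ℕ} (h : ω * a + (i : Ordinal) = ω * b + (j : Ordinal)) :
    a = b ∧ i = j := by
  have hω : (ω : Ordinal) ≠ 0 := Ordinal.omega0_ne_zero
  have hdiv : (ω * a + (i : Ordinal)) / ω = (ω * b + (j : Ordinal)) / ω := by rw [h]
  rw [Ordinal.mul_add_div _ hω, Ordinal.mul_add_div _ hω,
    Ordinal.div_eq_zero_of_lt (Ordinal.nat_lt_omega0 i),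
    Ordinal.div_eq_zero_of_lt (Ordinal.nat_lt_omega0 j), add_zero, add_zero] at hdiv
  refine ⟨hdiv, ?_⟩
  rw [hdiv] at h
  have hij := add_left_cancel_iff.1 h
  exact_mod_cast hij

lemma code_lt {lam : Cardinal.{0}} (hunc : ℵ₀ < lam) {a : Ordinal.{0}} (ha : a < lam.ord) (i : ℕ) :
    ω * a + (i : Ordinal) < lam.ord := by
  rw [Cardinal.lt_ord] at ha ⊢
  rw [Ordinal.card_add, Ordinal.card_mul, Ordinal.card_omega0, Ordinal.card_nat]
  exact Cardinal.add_lt_of_lt hunc.le (Cardinal.mul_lt_of_lt hunc.le hunc ha)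
    ((Cardinal.nat_lt_aleph0 i).trans hunc)

/-- Let `λ` be uncountable and `G` a graph on `λ⁺` with chromatic number `λ⁺`
(i.e. `G` has no proper coloring by `λ` colors).  Then there is `f : λ⁺ → λ⁺` such that for
every club `C ⊆ λ⁺` the induced subgraph of `G` on `⋃ {[α, f α] : α ∈ C}` has chromatic
number `λ⁺`. -/
theorem statement2 (lam : Cardinal.{0}) (hunc : ℵ₀ < lam)
    (G : SimpleGraph Ordinal)
    (hG : ∀ a b, G.Adj a b → a < (Order.succ lam).ord ∧ b < (Order.succ lam).ord)
    (hchr : ¬ ColorableOn G (Set.Iio (Order.succ lam).ord) lam) :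
    ∃ f : Ordinal → Ordinal, (∀ α < (Order.succ lam).ord, f α < (Order.succ lam).ord) ∧
      ∀ C : Set Ordinal, IsClubIn C (Order.succ lam).ord →
        ¬ ColorableOn G (⋃ α ∈ C, Set.Icc α (f α)) lam := by
  classical
  set κ : Ordinal := (Order.succ lam).ord with hκdef
  have hreg : (Order.succ lam).IsRegular := Cardinal.isRegular_succ hunc.le
  have hcof : ℵ₀ < κ.cof := by
    rw [hκdef, hreg.cof_eq]
    exact hunc.trans (Order.lt_succ lam)
  by_contra hcon
  push_neg at hcon
  have H : ∀ g : Ordinal → Ordinal, ∃ (C : Set Ordinal) (c : Ordinal → Ordinal),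
      (∀ α < κ, g α < κ) →
        IsClubIn C κ ∧ (∀ x ∈ ⋃ α ∈ C, Set.Icc α (g α), c x < lam.ord) ∧
        ∀ x ∈ ⋃ α ∈ C, Set.Icc α (g α), ∀ y ∈ ⋃ α ∈ C, Set.Icc α (g α),
          G.Adj x y → c x ≠ c y := by
    intro g
    by_cases hg : ∀ α < κ, g α < κ
    · obtain ⟨C, hC, c, hc1, hc2⟩ := hcon g hg
      exact ⟨C, c, fun _ => ⟨hC, hc1, hc2⟩⟩
    · exact ⟨∅, id, fun hg' => absurd hg' hg⟩
  choose club col hclub using H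
  -- iterated construction
  let s : ℕ → (Ordinal → Ordinal) × Set Ordinal := fun n =>
    Nat.rec (⟨id, club id⟩ : (Ordinal → Ordinal) × Set Ordinal)
      (fun _ p => ⟨fun α => clubNext p.2 (p.1 α),
        p.2 ∩ club (fun α => clubNext p.2 (p.1 α))⟩) n
  let f : ℕ → Ordinal → Ordinal := fun n => (s n).1
  let D : ℕ → Set Ordinal := fun n => (s n).2
  have hDS : ∀ n, D (n + 1) = D n ∩ club (f (n + 1)) := fun n => rfl
  have inv : ∀ n, (∀ α < κ, f n α < κ) ∧ IsClubIn (D n) κ ∧ D n ⊆ club (f n) := by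
    intro n
    induction n with
    | zero =>
      have hA : ∀ α < κ, f 0 α < κ := fun α h => h
      exact ⟨hA, (hclub id hA).1, subset_rfl⟩
    | succ n ih =>
      obtain ⟨hA, hDclub, _⟩ := ih
      have hA' : ∀ α < κ, f (n + 1) α < κ := fun α hα =>
        hDclub.1 (clubNext_spec hDclub.2.1 (hA α hα)).1
      have hclub' := hclub (f (n + 1)) hA'
      refine ⟨hA', ?_, ?_⟩
      · rw [hDS]
        exact isClubIn_inter hcof hDclub hclub'.1
      · rw [hDS]
        exact Set.inter_subset_right
  have hfmem : ∀ n, ∀ α < κ, f n α < f (n + 1) α ∧ f (n + 1) α ∈ D n := by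
    intro n α hα
    have h := clubNext_spec (inv n).2.1.2.1 ((inv n).1 α hα)
    exact ⟨h.2, h.1⟩
  have hDanti : ∀ n k, n ≤ k → D k ⊆ D n := by
    intro n k hnk
    induction k, hnk using Nat.le_induction with
    | base => exact subset_rfl
    | succ k hk ih =>
      refine Set.Subset.trans ?_ ih
      rw [hDS k]
      exact Set.inter_subset_left
  have hfmono : ∀ α, α < κ → ∀ n k, n ≤ k → f n α ≤ f k α := by
    intro α hα n k hnk
    induction k, hnk using Nat.le_induction with
    | base => exact le_rfl
    | succ k hk ih => exact ih.trans (hfmem k α hα).1.le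
  set Cstar : Set Ordinal := ⋂ n, D n with hCstardef
  have hCs : IsClubIn Cstar κ := isClubIn_iInter hcof D fun n => (inv n).2.1
  have hCsub : ∀ n, Cstar ⊆ D n := fun n => Set.iInter_subset D n
  -- the limit function
  have hfs_lt : ∀ α < κ, (⨆ n, f n α) < κ := fun α hα =>
    supNat_lt hcof _ fun n => (inv n).1 α hα
  have hfs_gt : ∀ α < κ, α < ⨆ n, f n α := by
    intro α hα
    exact (hfmem 0 α hα).1.trans_le (le_ciSup (Ordinal.bddAbove_range _) 1)
  have hfs_mem : ∀ α < κ, (⨆ n, f n α) ∈ Cstar := by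
    intro α hα
    refine Set.mem_iInter.2 fun n => ?_
    have hsub : Set.range (fun k => f (n + k + 1) α) ⊆ D n := by
      rintro _ ⟨k, rfl⟩
      exact hDanti n (n + k) (Nat.le_add_right n k) (hfmem (n + k) α hα).2
    have hsup : sSup (Set.range fun k => f (n + k + 1) α) = ⨆ n, f n α := by
      apply le_antisymm
      · refine csSup_le ⟨_, ⟨0, rfl⟩⟩ ?_
        rintro _ ⟨k, rfl⟩
        exact le_ciSup (Ordinal.bddAbove_range _) (n + k + 1)
      · refine ciSup_le fun k => ?_
        exact (hfmono α hα k (n + k + 1) (by omega)).trans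
          (le_csSup (Ordinal.bddAbove_range _) ⟨k, rfl⟩)
    have hm := (inv n).2.1.2.2 _ hsub ⟨_, ⟨0, rfl⟩⟩ (by rw [hsup]; exact hfs_lt α hα)
    rwa [hsup] at hm
  -- least element of Cstar
  have hCne : Cstar.Nonempty := by
    obtain ⟨y, hy, _⟩ := hCs.2.1 0 hreg.ord_pos
    exact ⟨y, hy⟩
  set m : Ordinal := sInf Cstar with hmdef
  have hm : m ∈ Cstar := csInf_mem hCne
  have hmκ : m < κ := hCs.1 hm
  -- the sup of Cstar below x
  set alp : Ordinal → Ordinal := fun x => sSup (Cstar ∩ Set.Iic x) with halpdef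
  have halp : ∀ x, m ≤ x → x < κ → alp x ∈ Cstar ∧ alp x ≤ x := by
    intro x hmx hx
    have hne : (Cstar ∩ Set.Iic x).Nonempty := ⟨m, hm, hmx⟩
    have hle : alp x ≤ x := csSup_le hne fun b hb => hb.2
    exact ⟨hCs.2.2 _ Set.inter_subset_left hne (hle.trans_lt hx), hle⟩
  have hcov : ∀ x, m ≤ x → x < κ → ∃ n, x ≤ f n (alp x) := by
    intro x hmx hx
    obtain ⟨hαC, hαle⟩ := halp x hmx hx
    have hακ : alp x < κ := hαle.trans_lt hx
    by_contra hno
    push_neg at hno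
    have h1 : (⨆ n, f n (alp x)) ≤ x := ciSup_le fun n => (hno n).le
    have h2 : (⨆ n, f n (alp x)) ∈ Cstar ∩ Set.Iic x := ⟨hfs_mem _ hακ, h1⟩
    have h3 : (⨆ n, f n (alp x)) ≤ alp x := le_csSup ⟨x, fun b hb => hb.2⟩ h2
    exact absurd (hfs_gt _ hακ) (not_lt.2 h3)
  set nn : Ordinal → ℕ := fun x => sInf {n | x ≤ f n (alp x)} with hnndef
  have hnn : ∀ x, m ≤ x → x < κ → x ≤ f (nn x) (alp x) := fun x hmx hx =>
    Nat.sInf_mem (hcov x hmx hx)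
  have hUmem : ∀ x, m ≤ x → x < κ →
      x ∈ ⋃ α ∈ club (f (nn x)), Set.Icc α (f (nn x) α) := by
    intro x hmx hx
    obtain ⟨hαC, hαle⟩ := halp x hmx hx
    exact Set.mem_iUnion₂.2 ⟨alp x, (inv (nn x)).2.2 (hCsub (nn x) hαC),
      hαle, hnn x hmx hx⟩
  -- injection of Iio m into Iio lam.ord
  have hemb : Nonempty (↥(Set.Iio m) ↪ ↥(Set.Iio lam.ord)) := by
    rw [← Cardinal.le_def, Ordinal.mk_Iio_ordinal, Ordinal.mk_Iio_ordinal,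
      Cardinal.card_ord, Cardinal.lift_le]
    have hlt : m.card < Order.succ lam := Cardinal.lt_ord.1 hmκ
    exact Order.lt_succ_iff.1 hlt
  obtain ⟨e⟩ := hemb
  set elow : Ordinal → Ordinal := fun x => if h : x < m then (e ⟨x, h⟩).1 else 0
    with helowdef
  have helow_lt : ∀ x < m, elow x < lam.ord := by
    intro x hx
    rw [helowdef]
    dsimp only
    rw [dif_pos hx]
    exact (e ⟨x, hx⟩).2
  have helow_inj : ∀ x < m, ∀ y < m, elow x = elow y → x = y := by
    intro x hx y hy hxy
    rw [helowdef] at hxy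
    dsimp only at hxy
    rw [dif_pos hx, dif_pos hy] at hxy
    exact congrArg Subtype.val (e.injective (Subtype.ext hxy))
  -- the final coloring
  apply hchr
  refine ⟨fun x => if h : m ≤ x ∧ x < κ
      then ω * col (f (nn x)) x + ((2 * nn x + 2 : ℕ) : Ordinal)
      else ω * elow x + ((1 : ℕ) : Ordinal), ?_, ?_⟩
  · intro x hx
    have hxκ : x < κ := hx
    dsimp only
    by_cases hmx : m ≤ x
    · rw [dif_pos ⟨hmx, hxκ⟩]
      exact code_lt hunc ((hclub (f (nn x)) (inv (nn x)).1).2.1 x (hUmem x hmx hxκ)) _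
    · rw [dif_neg fun hc => hmx hc.1]
      exact code_lt hunc (helow_lt x (not_le.1 hmx)) _
  · intro x hx y hy hadj heq
    have hxκ : x < κ := hx
    have hyκ : y < κ := hy
    dsimp only at heq
    by_cases hmx : m ≤ x <;> by_cases hmy : m ≤ y
    · rw [dif_pos ⟨hmx, hxκ⟩, dif_pos ⟨hmy, hyκ⟩] at heq
      obtain ⟨hcoleq, hij⟩ := code_inj heq
      have hNeq : nn x = nn y := by omega
      have hmemy := hUmem y hmy hyκ
      rw [← hNeq] at hmemy hcoleq
      exact (hclub (f (nn x)) (inv (nn x)).1).2.2 x (hUmem x hmx hxκ) y hmemy hadj hcoleq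
    · rw [dif_pos ⟨hmx, hxκ⟩, dif_neg fun hc => hmy hc.1] at heq
      have h2 := (code_inj heq).2
      omega
    · rw [dif_neg fun hc => hmx hc.1, dif_pos ⟨hmy, hyκ⟩] at heq
      have h2 := (code_inj heq).2
      omega
    · rw [dif_neg fun hc => hmx hc.1, dif_neg fun hc => hmy hc.1] at heq
      obtain ⟨hel, -⟩ := code_inj heq
      exact hadj.ne (helow_inj x (not_le.1 hmx) y (not_le.1 hmy) hel)
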